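/- Let A be a P₀-algebra, I the ideal generated by elements of positive degree, and g = I⁽²⁾ ∩ A^{-1} the degree -1 part of the square of I. Then for all j ≥ 0, [g, I⁽ʲ⁾] ⊆ I⁽ʲ⁺¹⁾. In particular, g is a Lie subalgebra (under the Poisson bracket) whose adjoint action on A/FᵖA is nilpotent for every p, where FᵖA is the ideal generated by elements of degree ≥ p. -/

import Mathlib

/-- A `P₀`-algebra over a field `k`: a ℤ-graded (graded-commutative) algebra with a
Poisson bracket of degree `1` satisfying graded antisymmetry, Leibniz rule and
graded Jacobi identity. -/
structure P0Data (k A : Type*) [Field k] [Ring A] [Algebra k A] where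
  grade : ℤ → Submodule k A
  internal : DirectSum.IsInternal grade
  one_mem : (1 : A) ∈ grade 0
  mul_mem : ∀ {r s : ℤ} {a b : A}, a ∈ grade r → b ∈ grade s → a * b ∈ grade (r + s)
  gcomm : ∀ {r s : ℤ} {a b : A}, a ∈ grade r → b ∈ grade s →
    a * b = ((-1 : k) ^ (r * s)) • (b * a)
  bracket : A →ₗ[k] A →ₗ[k] A
  bracket_mem : ∀ {r s : ℤ} {a b : A}, a ∈ grade r → b ∈ grade s →
    bracket a b ∈ grade (r + s + 1)
  antisymm : ∀ {r s : ℤ} {a b : A}, a ∈ grade r → b ∈ grade s →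
    bracket a b = -(((-1 : k) ^ ((r - 1) * (s - 1))) • bracket b a)
  leibniz : ∀ {r s : ℤ} {a b : A} (c : A), a ∈ grade r → b ∈ grade s →
    bracket (a * b) c = a * bracket b c + ((-1 : k) ^ (r * s)) • (b * bracket a c)
  jacobi : ∀ {r s t : ℤ} {a b c : A}, a ∈ grade r → b ∈ grade s → c ∈ grade t →
    ((-1 : k) ^ ((r - 1) * (t - 1))) • bracket (bracket a b) c +
      ((-1 : k) ^ ((s - 1) * (r - 1))) • bracket (bracket b c) a +
      ((-1 : k) ^ ((t - 1) * (s - 1))) • bracket (bracket c a) b = 0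

/-- The ideal `FᵖA` generated by homogeneous elements of degree at least `p`. -/
def P0Data.filt {k A : Type*} [Field k] [Ring A] [Algebra k A] (P : P0Data k A) (p : ℤ) :
    Submodule k A :=
  Submodule.span k {x | ∃ (a b : A) (q : ℤ), p ≤ q ∧ b ∈ P.grade q ∧ x = a * b}

/-- The powers `I⁽ʲ⁾` of the ideal `I = F¹A` generated by elements of positive degree:
`I⁽⁰⁾ = A`, `I⁽ʲ⁺¹⁾ = I · I⁽ʲ⁾`. -/
def P0Data.ipow {k A : Type*} [Field k] [Ring A] [Algebra k A] (P : P0Data k A) :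
    ℕ → Submodule k A
  | 0 => ⊤
  | j + 1 => Submodule.span k {x | ∃ a ∈ P.filt 1, ∃ b ∈ P.ipow j, x = a * b}

namespace P0Data

variable {k A : Type*} [Field k] [Ring A] [Algebra k A] (P : P0Data k A)

lemma mem_of_homog (S : Submodule k A)
    (h : ∀ (r : ℤ) (x : A), x ∈ P.grade r → x ∈ S) (x : A) : x ∈ S := by
  have htop : iSup P.grade = ⊤ := P.internal.submodule_iSup_eq_top
  have hx : x ∈ iSup P.grade := htop ▸ Submodule.mem_top
  exact (iSup_le (fun r y hy => h r y hy) : iSup P.grade ≤ S) hx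

lemma span_induction_comap {s : Set A} {x : A} (hx : x ∈ Submodule.span k s)
    (f : A →ₗ[k] A) (S : Submodule k A) (h : ∀ y ∈ s, f y ∈ S) : f x ∈ S := by
  have : Submodule.span k s ≤ S.comap f := Submodule.span_le.mpr fun y hy => h y hy
  exact this hx

lemma homog_induction (f : A →ₗ[k] A) (S : Submodule k A)
    (h : ∀ (r : ℤ) (y : A), y ∈ P.grade r → f y ∈ S) (x : A) : f x ∈ S :=
  P.mem_of_homog (S.comap f) (fun r y hy => h r y hy) x

lemma homog_mem_filt {p q : ℤ} {x : A} (hx : x ∈ P.grade q) (hpq : p ≤ q) :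
    x ∈ P.filt p :=
  Submodule.subset_span ⟨1, x, q, hpq, hx, (one_mul x).symm⟩

lemma filt_mono {p q : ℤ} (hpq : p ≤ q) : P.filt q ≤ P.filt p :=
  Submodule.span_le.mpr fun x ⟨a, b, q', hq', hb, hx⟩ =>
    Submodule.subset_span ⟨a, b, q', hpq.trans hq', hb, hx⟩

lemma mul_mem_filt_left (c : A) {p : ℤ} {x : A} (hx : x ∈ P.filt p) :
    c * x ∈ P.filt p := by
  have := span_induction_comap (s := {x | ∃ (a b : A) (q : ℤ), p ≤ q ∧ b ∈ P.grade q ∧ x = a * b})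
    hx (LinearMap.mulLeft k c) (P.filt p) ?_
  · simpa using this
  · rintro y ⟨a, b, q, hq, hb, rfl⟩
    simp only [LinearMap.mulLeft_apply, ← mul_assoc]
    exact Submodule.subset_span ⟨c * a, b, q, hq, hb, rfl⟩

lemma mul_mem_filt_right {p : ℤ} {x : A} (hx : x ∈ P.filt p) (c : A) :
    x * c ∈ P.filt p := by
  have := span_induction_comap (s := {x | ∃ (a b : A) (q : ℤ), p ≤ q ∧ b ∈ P.grade q ∧ x = a * b})
    hx (LinearMap.mulRight k c) (P.filt p) ?_
  · simpa using this
  · rintro y ⟨a, b, q, hq, hb, rfl⟩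
    simp only [LinearMap.mulRight_apply]
    -- a * b * c : decompose c into homogeneous pieces
    have := P.homog_induction (LinearMap.mulLeft k a ∘ₗ LinearMap.mulLeft k b) (P.filt p) ?_ c
    · simpa [mul_assoc] using this
    · intro r y hy
      simp only [LinearMap.coe_comp, Function.comp_apply, LinearMap.mulLeft_apply]
      rw [P.gcomm hb hy, mul_smul_comm, ← mul_assoc]
      exact Submodule.smul_mem _ _ (Submodule.subset_span ⟨a * y, b, q, hq, hb, rfl⟩)

end P0Data
namespace P0Data

variable {k A : Type*} [Field k] [Ring A] [Algebra k A] (P : P0Data k A)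

/-- multiplying a `filt p` element on the right by a homogeneous element of
degree at least `q` lands in `filt (p+q)`. -/
lemma filt_mul_homog {p q s : ℤ} {x d : A} (hx : x ∈ P.filt p)
    (hd : d ∈ P.grade s) (hqs : q ≤ s) : x * d ∈ P.filt (p + q) := by
  have := span_induction_comap hx (LinearMap.mulRight k d) (P.filt (p + q)) ?_
  · simpa using this
  · rintro y ⟨a, b, q', hq', hb, rfl⟩
    simp only [LinearMap.mulRight_apply, mul_assoc]
    exact Submodule.subset_span ⟨a, b * d, q' + s, by omega, P.mul_mem hb hd, rfl⟩

lemma filt_mul_filt {p q : ℤ} {x y : A} (hx : x ∈ P.filt p) (hy : y ∈ P.filt q) :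
    x * y ∈ P.filt (p + q) := by
  have := span_induction_comap hy (LinearMap.mulLeft k x) (P.filt (p + q)) ?_
  · simpa using this
  · rintro z ⟨c, d, q', hq', hd, rfl⟩
    simp only [LinearMap.mulLeft_apply, ← mul_assoc]
    exact P.filt_mul_homog (P.mul_mem_filt_right hx c) hd hq'

lemma filt_le_span_homog (p : ℤ) :
    P.filt p ≤ Submodule.span k {x | (∃ r, x ∈ P.grade r) ∧ x ∈ P.filt p} := by
  refine Submodule.span_le.mpr ?_
  rintro x ⟨a, b, q, hq, hb, rfl⟩
  have := P.homog_induction (LinearMap.mulRight k b)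
    (Submodule.span k {x | (∃ r, x ∈ P.grade r) ∧ x ∈ P.filt p}) ?_ a
  · simpa using this
  · intro r y hy
    simp only [LinearMap.mulRight_apply]
    exact Submodule.subset_span ⟨⟨r + q, P.mul_mem hy hb⟩,
      Submodule.subset_span ⟨y, b, q, hq, hb, rfl⟩⟩

lemma filt_le_span_pair (p : ℤ) :
    P.filt p ≤ Submodule.span k
      {x | ∃ (r q : ℤ) (a b : A), a ∈ P.grade r ∧ b ∈ P.grade q ∧ p ≤ q ∧ x = a * b} := by
  refine Submodule.span_le.mpr ?_
  rintro x ⟨a, b, q, hq, hb, rfl⟩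
  have := P.homog_induction (LinearMap.mulRight k b)
    (Submodule.span k {x | ∃ (r q : ℤ) (a b : A),
      a ∈ P.grade r ∧ b ∈ P.grade q ∧ p ≤ q ∧ x = a * b}) ?_ a
  · simpa using this
  · intro r y hy
    simp only [LinearMap.mulRight_apply]
    exact Submodule.subset_span ⟨r, q, y, b, hy, hb, hq, rfl⟩

lemma ipow_mul_left (j : ℕ) (c : A) {x : A} (hx : x ∈ P.ipow j) :
    c * x ∈ P.ipow j := by
  cases j with
  | zero => trivial
  | succ j =>
    have := span_induction_comap hx (LinearMap.mulLeft k c) (P.ipow (j + 1)) ?_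
    · simpa using this
    · rintro y ⟨a, ha, b, hb, rfl⟩
      simp only [LinearMap.mulLeft_apply, ← mul_assoc]
      exact Submodule.subset_span ⟨c * a, P.mul_mem_filt_left c ha, b, hb, rfl⟩

lemma ipow_succ_le (j : ℕ) : P.ipow (j + 1) ≤ P.ipow j := by
  induction j with
  | zero => exact le_top
  | succ j ih =>
    refine Submodule.span_le.mpr ?_
    rintro x ⟨a, ha, b, hb, rfl⟩
    exact Submodule.subset_span ⟨a, ha, b, ih hb, rfl⟩

lemma filt_le_ipow_one : P.filt 1 ≤ P.ipow 1 := fun x hx =>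
  Submodule.subset_span ⟨x, hx, 1, trivial, (mul_one x).symm⟩

lemma ipow_one_le_filt : P.ipow 1 ≤ P.filt 1 := by
  refine Submodule.span_le.mpr ?_
  rintro x ⟨a, ha, b, _, rfl⟩
  exact P.mul_mem_filt_right ha b

lemma ipow_le_filt (j : ℕ) : P.ipow j ≤ P.filt (j : ℤ) := by
  induction j with
  | zero =>
    intro x _
    exact Submodule.subset_span ⟨x, 1, 0, le_refl 0, P.one_mem, (mul_one x).symm⟩
  | succ j ih =>
    refine Submodule.span_le.mpr ?_
    rintro x ⟨a, ha, b, hb, rfl⟩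
    have := P.filt_mul_filt ha (ih hb)
    have h1 : (1 : ℤ) + (j : ℤ) = ((j + 1 : ℕ) : ℤ) := by push_cast; ring
    rwa [h1] at this

lemma ipow_mul_ipow (i j : ℕ) {x y : A} (hx : x ∈ P.ipow i) (hy : y ∈ P.ipow j) :
    x * y ∈ P.ipow (i + j) := by
  induction i generalizing x with
  | zero => simpa using P.ipow_mul_left j x hy
  | succ i ih =>
    have := span_induction_comap hx (LinearMap.mulRight k y) (P.ipow (i + 1 + j)) ?_
    · simpa using this
    · rintro z ⟨a, ha, b, hb, rfl⟩
      simp only [LinearMap.mulRight_apply, mul_assoc]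
      have : i + 1 + j = (i + j) + 1 := by omega
      rw [this]
      exact Submodule.subset_span ⟨a, ha, b * y, ih hb, rfl⟩

end P0Data
namespace P0Data

variable {k A : Type*} [Field k] [Ring A] [Algebra k A] (P : P0Data k A)

lemma ipow_le_span_homog (j : ℕ) :
    P.ipow j ≤ Submodule.span k {x | (∃ r, x ∈ P.grade r) ∧ x ∈ P.ipow j} := by
  induction j with
  | zero =>
    intro x _
    have := P.homog_induction (LinearMap.id)
      (Submodule.span k {x | (∃ r, x ∈ P.grade r) ∧ x ∈ P.ipow 0}) ?_ x
    · simpa using this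
    · intro r y hy
      exact Submodule.subset_span ⟨⟨r, hy⟩, trivial⟩
  | succ j ih =>
    refine Submodule.span_le.mpr ?_
    rintro x ⟨a, ha, b, hb, rfl⟩
    -- decompose a via filt_le_span_pair
    have ha' := P.filt_le_span_pair 1 ha
    have := span_induction_comap ha' (LinearMap.mulRight k b)
      (Submodule.span k {x | (∃ r, x ∈ P.grade r) ∧ x ∈ P.ipow (j + 1)}) ?_
    · simpa using this
    · rintro y ⟨r, q, u, v, hu, hv, hq, rfl⟩
      simp only [LinearMap.mulRight_apply]
      -- now decompose b via ih
      have hb' := ih hb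
      have := span_induction_comap hb' (LinearMap.mulLeft k (u * v))
        (Submodule.span k {x | (∃ r, x ∈ P.grade r) ∧ x ∈ P.ipow (j + 1)}) ?_
      · simpa [mul_assoc] using this
      · rintro z ⟨⟨s, hz⟩, hzj⟩
        simp only [LinearMap.mulLeft_apply]
        refine Submodule.subset_span ⟨⟨r + q + s, ?_⟩, ?_⟩
        · simpa [mul_assoc] using P.mul_mem (P.mul_mem hu hv) hz
        · exact Submodule.subset_span ⟨u * v,
            P.mul_mem_filt_left u (P.homog_mem_filt hv hq), z, hzj, rfl⟩

lemma ipow_succ_le_span (j : ℕ) :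
    P.ipow (j + 1) ≤ Submodule.span k
      {x | ∃ (q : ℤ) (v c : A), v ∈ P.grade q ∧ 1 ≤ q ∧ c ∈ P.ipow j ∧ x = v * c} := by
  refine Submodule.span_le.mpr ?_
  rintro x ⟨a, ha, b, hb, rfl⟩
  have ha' := P.filt_le_span_pair 1 ha
  have := span_induction_comap ha' (LinearMap.mulRight k b)
    (Submodule.span k
      {x | ∃ (q : ℤ) (v c : A), v ∈ P.grade q ∧ 1 ≤ q ∧ c ∈ P.ipow j ∧ x = v * c}) ?_
  · simpa using this
  · rintro y ⟨r, q, u, v, hu, hv, hq, rfl⟩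
    simp only [LinearMap.mulRight_apply]
    rw [P.gcomm hu hv, smul_mul_assoc, mul_assoc]
    exact Submodule.smul_mem _ _ (Submodule.subset_span
      ⟨q, v, u * b, hv, hq, P.ipow_mul_left j u hb, rfl⟩)

end P0Data
namespace P0Data

variable {k A : Type*} [Field k] [Ring A] [Algebra k A] (P : P0Data k A)

lemma bracket_homog_filt {s : ℤ} {v c : A} (hv : v ∈ P.grade s) (hs : 1 ≤ s)
    (hc : c ∈ P.filt 1) : P.bracket v c ∈ P.filt 1 := by
  have hc' := P.filt_le_span_pair 1 hc
  have := span_induction_comap hc' (P.bracket v) (P.filt 1) ?_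
  · simpa using this
  · rintro y ⟨r, t, w, z, hw, hz, ht, rfl⟩
    have hm : w * z ∈ P.grade (r + t) := P.mul_mem hw hz
    rw [P.antisymm hv hm, P.leibniz v hw hz]
    refine Submodule.neg_mem _ (Submodule.smul_mem _ _
      (Submodule.add_mem _ ?_ (Submodule.smul_mem _ _ ?_)))
    · exact P.mul_mem_filt_left w
        (P.homog_mem_filt (P.bracket_mem hz hv) (by omega))
    · exact P.mul_mem_filt_right (P.homog_mem_filt hz ht) _

lemma bracket_filt_ipow2 {c g : A} (hc : c ∈ P.filt 1) (hg : g ∈ P.ipow 2) :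
    P.bracket c g ∈ P.ipow 2 := by
  have hg' := P.ipow_succ_le_span 1 hg
  have := span_induction_comap hg' (P.bracket c) (P.ipow 2) ?_
  · simpa using this
  · rintro m ⟨q, v, d, hv, hq, hd, rfl⟩
    have hd' := P.filt_le_span_pair 1 (P.ipow_one_le_filt hd)
    have := span_induction_comap hd' (P.bracket c ∘ₗ LinearMap.mulLeft k v) (P.ipow 2) ?_
    · simpa using this
    · rintro y ⟨r, t, w, z, hw, hz, ht, rfl⟩
      simp only [LinearMap.coe_comp, Function.comp_apply, LinearMap.mulLeft_apply]
      rw [← mul_assoc]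
      have hc' := P.filt_le_span_homog 1 hc
      have := span_induction_comap hc' (P.bracket.flip (v * w * z)) (P.ipow 2) ?_
      · simpa using this
      · rintro e ⟨⟨u, he⟩, heF⟩
        simp only [LinearMap.flip_apply]
        have hvw : v * w ∈ P.grade (q + r) := P.mul_mem hv hw
        have hm : v * w * z ∈ P.grade (q + r + t) := P.mul_mem hvw hz
        rw [P.antisymm he hm, P.leibniz e hvw hz, P.leibniz e hv hw]
        refine Submodule.neg_mem _ (Submodule.smul_mem _ _
          (Submodule.add_mem _ ?_ (Submodule.smul_mem _ _ ?_)))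
        · exact Submodule.subset_span ⟨v * w,
            P.mul_mem_filt_right (P.homog_mem_filt hv hq) w,
            P.bracket z e, P.filt_le_ipow_one (P.bracket_homog_filt hz ht heF), rfl⟩
        · rw [mul_add, mul_smul_comm]
          refine Submodule.add_mem _ ?_ (Submodule.smul_mem _ _ ?_)
          · exact Submodule.subset_span ⟨z, P.homog_mem_filt hz ht,
              v * P.bracket w e,
              Submodule.subset_span ⟨v, P.homog_mem_filt hv hq,
                P.bracket w e, Submodule.mem_top, rfl⟩, rfl⟩
          · exact Submodule.subset_span ⟨z, P.homog_mem_filt hz ht,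
              w * P.bracket v e,
              P.ipow_mul_left 1 w
                (P.filt_le_ipow_one (P.bracket_homog_filt hv hq heF)), rfl⟩

lemma bracket_ipow2_top {g : A} (hg : g ∈ P.ipow 2) (x : A) :
    P.bracket g x ∈ P.ipow 1 := by
  have hg' := P.ipow_succ_le_span 1 hg
  have := span_induction_comap hg' (P.bracket.flip x) (P.ipow 1) ?_
  · simpa using this
  · rintro m ⟨q, v, d, hv, hq, hd, rfl⟩
    have hd' := P.filt_le_span_pair 1 (P.ipow_one_le_filt hd)
    have := span_induction_comap hd'
      (P.bracket.flip x ∘ₗ LinearMap.mulLeft k v) (P.ipow 1) ?_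
    · simpa using this
    · rintro y ⟨r, t, w, z, hw, hz, ht, rfl⟩
      simp only [LinearMap.coe_comp, Function.comp_apply, LinearMap.mulLeft_apply,
        LinearMap.flip_apply]
      rw [← mul_assoc, P.leibniz x (P.mul_mem hv hw) hz]
      refine Submodule.add_mem _ ?_ (Submodule.smul_mem _ _ ?_)
      · exact Submodule.subset_span ⟨v * w,
          P.mul_mem_filt_right (P.homog_mem_filt hv hq) w, _, Submodule.mem_top, rfl⟩
      · exact Submodule.subset_span ⟨z, P.homog_mem_filt hz ht, _,
          Submodule.mem_top, rfl⟩

lemma bracket_g_ipow (j : ℕ) {g : A} (hg2 : g ∈ P.ipow 2) (hg : g ∈ P.grade (-1)) :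
    ∀ x ∈ P.ipow j, P.bracket g x ∈ P.ipow (j + 1) := by
  induction j with
  | zero => exact fun x _ => P.bracket_ipow2_top hg2 x
  | succ j ih =>
    intro x hx
    have hx' := P.ipow_succ_le_span j hx
    have := span_induction_comap hx' (P.bracket g) (P.ipow (j + 1 + 1)) ?_
    · simpa using this
    · rintro m ⟨q, c, y, hc, hq, hy, rfl⟩
      have hy' := P.ipow_le_span_homog j hy
      have := span_induction_comap hy'
        (P.bracket g ∘ₗ LinearMap.mulLeft k c) (P.ipow (j + 1 + 1)) ?_
      · simpa using this
      · rintro z ⟨⟨s, hz⟩, hzj⟩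
        simp only [LinearMap.coe_comp, Function.comp_apply, LinearMap.mulLeft_apply]
        have hm : c * z ∈ P.grade (q + s) := P.mul_mem hc hz
        rw [P.antisymm hg hm, P.leibniz g hc hz, P.antisymm hz hg]
        refine Submodule.neg_mem _ (Submodule.smul_mem _ _
          (Submodule.add_mem _ ?_ (Submodule.smul_mem _ _ ?_)))
        · rw [mul_neg, mul_smul_comm]
          refine Submodule.neg_mem _ (Submodule.smul_mem _ _ ?_)
          exact Submodule.subset_span ⟨c, P.homog_mem_filt hc hq, _, ih z hzj, rfl⟩
        · have h1 : P.bracket c g ∈ P.ipow 2 :=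
            P.bracket_filt_ipow2 (P.homog_mem_filt hc hq) hg2
          exact P.ipow_mul_ipow j 2 hzj h1

end P0Data
/-- Let `g = I⁽²⁾ ∩ A^{-1}`. Then `[g, I⁽ʲ⁾] ⊆ I⁽ʲ⁺¹⁾` for all `j ≥ 0`;
in particular `g` is a Lie subalgebra under the Poisson bracket, and its iterated adjoint
action is nilpotent modulo each `FᵖA`. -/
theorem gauge_lie_algebra_pronilpotent {k A : Type*} [Field k] [CharZero k]
    [Ring A] [Algebra k A] (P : P0Data k A) :
    (∀ j : ℕ, ∀ a : A, a ∈ P.ipow 2 → a ∈ P.grade (-1) →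
      ∀ x ∈ P.ipow j, P.bracket a x ∈ P.ipow (j + 1)) ∧
    (∀ a b : A, a ∈ P.ipow 2 → a ∈ P.grade (-1) → b ∈ P.ipow 2 → b ∈ P.grade (-1) →
      P.bracket a b ∈ P.ipow 2 ⊓ P.grade (-1)) ∧
    (∀ (p : ℕ) (l : List A), (∀ a ∈ l, a ∈ P.ipow 2 ∧ a ∈ P.grade (-1)) →
      p ≤ l.length → ∀ x : A,
        l.foldr (fun a y => P.bracket a y) x ∈ P.filt (p : ℤ)) := by
  refine ⟨fun j a h2 hg x hx => P.bracket_g_ipow j h2 hg x hx, ?_, ?_⟩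
  · intro a b ha2 hag hb2 hbg
    refine ⟨P.ipow_succ_le 2 (P.bracket_g_ipow 2 ha2 hag b hb2), ?_⟩
    have h := P.bracket_mem hag hbg
    have e : (-1 : ℤ) + -1 + 1 = -1 := by norm_num
    rwa [e] at h
  · intro p l hl hp x
    have key : ∀ (l : List A), (∀ a ∈ l, a ∈ P.ipow 2 ∧ a ∈ P.grade (-1)) →
        l.foldr (fun a y => P.bracket a y) x ∈ P.ipow l.length := by
      intro l
      induction l with
      | nil => intro _; trivial
      | cons a t ih =>
        intro h
        exact P.bracket_g_ipow t.length (h a List.mem_cons_self).1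
          (h a List.mem_cons_self).2 _
          (ih fun b hb => h b (List.mem_cons_of_mem a hb))
    have h1 := P.ipow_le_filt l.length (key l hl)
    exact P.filt_mono (by exact_mod_cast hp) h1
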